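/- For every real ε > 0 there exists N such that for every n ≥ N there exist a natural number q with q ≤ (1 + ε) · 2^n, a reversible circuit S on n + q wires with permutation g and complexity at most (1 + ε) · 2^n, and an injection σ : Z2^n → Fin (n+q), such that for all x ∈ Z2^n and all a ∈ Z2^n, coordinate σ(a) of g(φ_{n,n+q}(x)) equals the conjunction x_1^{a_1} ∧ … ∧ x_n^{a_n}, i.e., equals Π_{i} (x_i + a_i + 1) computed in ZMod 2 (here x^1 = x and x^0 = x + 1). -/

import Mathlib

/-- The k-CNOT gate on `m` wires with control set `I` (with `j` removed, so that when
`j ∉ I` this is exactly the gate `C_{I;j}`): it replaces coordinate `j` of `x` by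
`x j + ∏ i ∈ I.erase j, x i` and leaves all other coordinates unchanged.
With `I = ∅` this is the gate NOT_j, with `I = {i}`, `i ≠ j`, the gate CNOT_{i;j},
and with `I = {i1, i2}`, `i1, i2, j` pairwise distinct, the gate 2-CNOT_{i1,i2;j}. -/
def kcnot (m : ℕ) (I : Finset (Fin m)) (j : Fin m) : Equiv.Perm (Fin m → ZMod 2) :=
  Function.Involutive.toPerm
    (fun x => Function.update x j (x j + ∏ i ∈ I.erase j, x i))
    (by
      intro x
      have ht : ∀ (y : Fin m → ZMod 2) (v : ZMod 2),
          ∏ i ∈ I.erase j, (Function.update y j v) i = ∏ i ∈ I.erase j, y i :=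
        fun y v => Finset.prod_congr rfl fun i hi =>
          Function.update_of_ne (Finset.ne_of_mem_erase hi) _ _
      have h2 : ∀ a : ZMod 2, a + a = 0 := by decide
      funext y
      by_cases hy : y = j
      · subst hy
        simp [Function.update_self, ht, add_assoc, h2]
      · simp [Function.update_of_ne hy])

/-- The set Ω_n^2 of all gates NOT, CNOT and 2-CNOT on `n` wires, viewed as
permutations of the Boolean cube `Fin n → ZMod 2`. -/
def gateSet (n : ℕ) : Set (Equiv.Perm (Fin n → ZMod 2)) :=
  {g | ∃ (I : Finset (Fin n)) (j : Fin n), I.card ≤ 2 ∧ j ∉ I ∧ g = kcnot n I j}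

/-- The permutation defined by a reversible circuit (a list of gates applied in
list order: the head of the list is applied first). -/
def circuitPerm {n : ℕ} (l : List (Equiv.Perm (Fin n → ZMod 2))) :
    Equiv.Perm (Fin n → ZMod 2) :=
  l.reverse.prod

/-- The extending map φ_{n,n+q} appending `q` zero coordinates. -/
def extendMap (n q : ℕ) (x : Fin n → ZMod 2) : Fin (n + q) → ZMod 2 :=
  fun i => if h : (i : ℕ) < n then x ⟨i, h⟩ else 0

/-- The reducing map ψ^π sending `y` to `(y (π 1), …, y (π n))`. -/
def reduceMap (n q : ℕ) (π : Equiv.Perm (Fin (n + q))) (y : Fin (n + q) → ZMod 2) :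
    Fin n → ZMod 2 :=
  fun i => y (π (Fin.castAdd q i))

/-- A map `f : Z2^n → Z2^n` is realized by some reversible circuit on `n + q` wires
using `q` additional inputs.  `F(n,q)` is the set of all such maps. -/
def Realizes (n q : ℕ) (f : (Fin n → ZMod 2) → (Fin n → ZMod 2)) : Prop :=
  ∃ l : List (Equiv.Perm (Fin (n + q) → ZMod 2)),
    (∀ g ∈ l, g ∈ gateSet (n + q)) ∧
    ∃ π : Equiv.Perm (Fin (n + q)),
      ∀ x, reduceMap n q π (circuitPerm l (extendMap n q x)) = f x

/-- `L(f,q)`: the minimal complexity of a reversible circuit realizing `f` using `q`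
additional inputs. -/
noncomputable def Lfq (n q : ℕ) (f : (Fin n → ZMod 2) → (Fin n → ZMod 2)) : ℕ :=
  sInf {m | ∃ l : List (Equiv.Perm (Fin (n + q) → ZMod 2)),
    l.length = m ∧ (∀ g ∈ l, g ∈ gateSet (n + q)) ∧
    ∃ π : Equiv.Perm (Fin (n + q)),
      ∀ x, reduceMap n q π (circuitPerm l (extendMap n q x)) = f x}

/-- The Shannon function `L(n,q) = max_{f ∈ F(n,q)} L(f,q)`. -/
noncomputable def shannonL (n q : ℕ) : ℕ :=
  sSup (Lfq n q '' {f | Realizes n q f})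

section Framework
variable {α β : Type*} [DecidableEq α] [DecidableEq β]

/-- An abstract instruction: a control set and a target wire. -/
abbrev Instr (α : Type*) := Finset α × α

def stepI (s : α → ZMod 2) (p : Instr α) : α → ZMod 2 :=
  Function.update s p.2 (s p.2 + ∏ i ∈ p.1.erase p.2, s i)

def execI (l : List (Instr α)) (s : α → ZMod 2) : α → ZMod 2 :=
  l.foldl stepI s

@[simp] lemma execI_nil (s : α → ZMod 2) : execI ([] : List (Instr α)) s = s := rfl
@[simp] lemma execI_cons (p : Instr α) (l : List (Instr α)) (s : α → ZMod 2) :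
    execI (p :: l) s = execI l (stepI s p) := rfl
lemma execI_append (l1 l2 : List (Instr α)) (s : α → ZMod 2) :
    execI (l1 ++ l2) s = execI l2 (execI l1 s) := List.foldl_append

lemma kcnot_apply (m : ℕ) (I : Finset (Fin m)) (j : Fin m) (x : Fin m → ZMod 2) :
    kcnot m I j x = Function.update x j (x j + ∏ i ∈ I.erase j, x i) := rfl

lemma circuitPerm_cons {m : ℕ} (g : Equiv.Perm (Fin m → ZMod 2))
    (l : List (Equiv.Perm (Fin m → ZMod 2))) (x : Fin m → ZMod 2) :
    circuitPerm (g :: l) x = circuitPerm l (g x) := by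
  simp [circuitPerm, List.reverse_cons, List.prod_append]

lemma circuitPerm_map (m : ℕ) (l : List (Instr (Fin m))) (x : Fin m → ZMod 2) :
    circuitPerm (l.map fun p => kcnot m p.1 p.2) x = execI l x := by
  induction l generalizing x with
  | nil => simp only [List.map_nil]; rfl
  | cons p l ih =>
      rw [List.map_cons, circuitPerm_cons, execI_cons, ← ih, kcnot_apply]
      rfl

def mapInstr (e : α ≃ β) (p : Instr α) : Instr β := (p.1.map e.toEmbedding, e p.2)

lemma stepI_map (e : α ≃ β) (s : β → ZMod 2) (p : Instr α) :
    stepI s (mapInstr e p) ∘ e = stepI (s ∘ e) p := by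
  have hprod : ∏ i ∈ (p.1.map e.toEmbedding).erase (e p.2), s i
      = ∏ i ∈ p.1.erase p.2, s (e i) := by
    rw [show e p.2 = e.toEmbedding p.2 from rfl, ← Finset.map_erase, Finset.prod_map]; rfl
  simp only [stepI, mapInstr, hprod, Function.update_comp_equiv,
    Equiv.symm_apply_apply, Function.comp_apply]

lemma execI_map (e : α ≃ β) (l : List (Instr α)) (s : β → ZMod 2) :
    execI (l.map (mapInstr e)) s ∘ e = execI l (s ∘ e) := by
  induction l generalizing s with
  | nil => simp
  | cons p l ih => rw [List.map_cons, execI_cons, execI_cons, ih, stepI_map]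

lemma stepI_noteq (s : α → ZMod 2) (p : Instr α) (w : α) (h : p.2 ≠ w) :
    stepI s p w = s w := Function.update_of_ne (Ne.symm h) _ _

lemma execI_untouched (l : List (Instr α)) (s : α → ZMod 2) (w : α)
    (hw : ∀ p ∈ l, p.2 ≠ w) : execI l s w = s w := by
  induction l generalizing s with
  | nil => rfl
  | cons p l ih =>
      rw [execI_cons, ih _ fun q hq => hw q (List.mem_cons_of_mem _ hq),
        stepI_noteq _ _ _ (hw p List.mem_cons_self)]

end Framework
section Block
variable {γ : Type*} [DecidableEq γ] {n u : ℕ} (ι : Fin u → Fin n)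
  (xw cw : Fin n → γ) (onew : γ) (zw : (Fin u → ZMod 2) × Fin u → γ)

/-- The literal wire holding `x (ι k) + a k + 1`. -/
def litW (a : Fin u → ZMod 2) (k : Fin u) : γ := if a k = 0 then cw (ι k) else xw (ι k)

/-- The `k`-th gate of the chain computing the conjunction indexed by `a`. -/
def gateW (a : Fin u → ZMod 2) (k : ℕ) : Instr γ :=
  if h : k < u then
    ({(if k = 0 then onew else zw (a, ⟨k - 1, by omega⟩)), litW ι xw cw a ⟨k, h⟩},
      zw (a, ⟨k, h⟩))
  else (∅, onew)

def chainW (a : Fin u → ZMod 2) (m : ℕ) : List (Instr γ) :=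
  (List.range m).map (gateW ι xw cw onew zw a)

def blockW (L : List (Fin u → ZMod 2)) : List (Instr γ) :=
  L.flatMap fun a => chainW ι xw cw onew zw a u

variable (x : Fin n → ZMod 2)

/-- Partial product of literals. -/
def PW (a : Fin u → ZMod 2) (k : ℕ) : ZMod 2 :=
  ∏ j ∈ Finset.range (k + 1), (if h : j < u then x (ι ⟨j, h⟩) + a ⟨j, h⟩ + 1 else 1)

variable {ι xw cw onew zw}

lemma zmod2_cases (z : ZMod 2) : z = 0 ∨ z = 1 := by revert z; decide

lemma chainW_target {a : Fin u → ZMod 2} {m : ℕ} (hm : m ≤ u) {p : Instr γ}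
    (hp : p ∈ chainW ι xw cw onew zw a m) :
    ∃ k, ∃ hk : k < m, p.2 = zw (a, ⟨k, lt_of_lt_of_le hk hm⟩) := by
  rcases List.mem_map.1 hp with ⟨k, hk, rfl⟩
  rw [List.mem_range] at hk
  have h : k < u := lt_of_lt_of_le hk hm
  exact ⟨k, hk, by simp [gateW, h]⟩

lemma blockW_target {L : List (Fin u → ZMod 2)} {p : Instr γ}
    (hp : p ∈ blockW ι xw cw onew zw L) : ∃ a ∈ L, ∃ k : Fin u, p.2 = zw (a, k) := by
  rcases List.mem_flatMap.1 hp with ⟨a, ha, hpa⟩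
  rcases chainW_target le_rfl hpa with ⟨k, hk, h⟩
  exact ⟨a, ha, _, h⟩

lemma litW_val (st : γ → ZMod 2) (hstx : ∀ i, st (xw i) = x i)
    (hstc : ∀ i, st (cw i) = x i + 1) (a : Fin u → ZMod 2) (k : Fin u) :
    st (litW ι xw cw a k) = x (ι k) + a k + 1 := by
  rcases zmod2_cases (a k) with h | h <;> rw [litW, h]
  · simp [hstc]
  · have h2 : (1 : ZMod 2) + 1 = 0 := by decide
    simp [hstx, add_assoc, h2]

variable (hz : Function.Injective zw) (hone : ∀ p, zw p ≠ onew)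
  (hxw : ∀ p i, zw p ≠ xw i) (hcw : ∀ p i, zw p ≠ cw i)
  (honex : ∀ i, onew ≠ xw i) (honec : ∀ i, onew ≠ cw i)

/-- The chain does not modify wires other than its own `zw (a, ·)` wires. -/
lemma chainW_frame {a : Fin u → ZMod 2} {m : ℕ} (hm : m ≤ u) (st : γ → ZMod 2)
    {w : γ} (hw : ∀ k : Fin u, w ≠ zw (a, k)) :
    execI (chainW ι xw cw onew zw a m) st w = st w := by
  refine execI_untouched _ _ _ fun p hp => ?_
  rcases chainW_target hm hp with ⟨k, hk, h⟩
  rw [h]; exact fun hEq => hw _ hEq.symm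

include hz hone hxw hcw honex honec in
lemma chainW_val (st : γ → ZMod 2) (hst1 : st onew = 1)
    (hstx : ∀ i, st (xw i) = x i) (hstc : ∀ i, st (cw i) = x i + 1)
    (a : Fin u → ZMod 2) (hst0 : ∀ k, st (zw (a, k)) = 0) :
    ∀ m, (hm : m ≤ u) → ∀ k, (hk : k < m) →
      execI (chainW ι xw cw onew zw a m) st (zw (a, ⟨k, lt_of_lt_of_le hk hm⟩))
        = PW ι x a k := by
  intro m
  induction m with
  | zero => intro _ k hk; exact absurd hk (Nat.not_lt_zero k)
  | succ m ih =>
    intro hm k hk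
    have hmu : m < u := hm
    set st' := execI (chainW ι xw cw onew zw a m) st with hst'
    have hchain : chainW ι xw cw onew zw a (m + 1)
        = chainW ι xw cw onew zw a m ++ [gateW ι xw cw onew zw a m] := by
      simp [chainW, List.range_succ]
    have hg : gateW ι xw cw onew zw a m =
        ({(if m = 0 then onew else zw (a, ⟨m - 1, by omega⟩)), litW ι xw cw a ⟨m, hmu⟩},
          zw (a, ⟨m, hmu⟩)) := by
      rw [gateW, dif_pos hmu]
    rw [hchain, execI_append, ← hst', execI_cons, execI_nil, hg]
    by_cases hkm : k < m
    · rw [stepI_noteq]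
      · have := ih (le_of_lt hmu) k hkm
        convert this using 3
      · intro hEq
        have := hz hEq
        simp only [Prod.mk.injEq, Fin.mk.injEq] at this
        omega
    · have hk' : k = m := by omega
      subst hk'
      -- the untouched facts about st'
      have hz' : st' (zw (a, ⟨k, hmu⟩)) = 0 := by
        rw [hst', execI_untouched, hst0]
        intro p hp
        rcases chainW_target (le_of_lt hmu) hp with ⟨k', hk', h⟩
        rw [h]
        intro hEq
        have := hz hEq
        simp only [Prod.mk.injEq, Fin.mk.injEq] at this
        omega
      have hlitne : ∀ k' : Fin u, litW ι xw cw a ⟨k, hmu⟩ ≠ zw (a, k') := by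
        intro k'
        rw [litW]
        split
        · exact fun h => (hcw _ _) h.symm
        · exact fun h => (hxw _ _) h.symm
      have hlit : st' (litW ι xw cw a ⟨k, hmu⟩) = x (ι ⟨k, hmu⟩) + a ⟨k, hmu⟩ + 1 := by
        rw [hst', chainW_frame (le_of_lt hmu) st hlitne]
        exact litW_val x st hstx hstc a ⟨k, hmu⟩
      have htargetne : zw (a, ⟨k, hmu⟩)
          ∉ ({(if k = 0 then onew else zw (a, ⟨k - 1, by omega⟩)),
              litW ι xw cw a ⟨k, hmu⟩} : Finset γ) := by
        simp only [Finset.mem_insert, Finset.mem_singleton]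
        push_neg
        constructor
        · split
          · exact hone _
          · intro hEq
            have := hz hEq
            simp only [Prod.mk.injEq, Fin.mk.injEq] at this
            omega
        · exact fun h => hlitne _ h.symm
      have hprevne : (if k = 0 then onew else zw (a, ⟨k - 1, by omega⟩))
          ≠ litW ι xw cw a ⟨k, hmu⟩ := by
        split
        · rw [litW]; split
          · exact honec _
          · exact honex _
        · exact fun h => hlitne _ h.symm
      simp only [stepI, Function.update_self, Finset.erase_eq_of_notMem htargetne,
        Finset.prod_pair hprevne, hz', zero_add]
      by_cases hk0 : k = 0
      · subst hk0
        have hst1' : st' onew = 1 := by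
          rw [hst', chainW_frame (le_of_lt hmu) st (fun k' => fun h => hone _ h.symm), hst1]
        rw [if_pos rfl, hst1', hlit, one_mul, PW, Finset.prod_range_one, dif_pos hmu]
      · have hm1 : k - 1 < k := by omega
        have hprev : st' (zw (a, ⟨k - 1, by omega⟩)) = PW ι x a (k - 1) := by
          rw [hst']
          have := ih (le_of_lt hmu) (k - 1) hm1
          convert this using 3
        rw [if_neg hk0, hprev, hlit]
        have hkk : k - 1 + 1 = k := by omega
        simp only [PW]
        rw [hkk, Finset.prod_range_succ, dif_pos hmu]

include hz in
lemma blockW_frame {L : List (Fin u → ZMod 2)} (st : γ → ZMod 2) {w : γ}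
    (hw : ∀ a ∈ L, ∀ k : Fin u, w ≠ zw (a, k)) :
    execI (blockW ι xw cw onew zw L) st w = st w := by
  refine execI_untouched _ _ _ fun p hp => ?_
  rcases blockW_target hp with ⟨a, ha, k, h⟩
  rw [h]
  exact fun hEq => hw a ha k hEq.symm

include hz hone hxw hcw honex honec in
lemma blockW_val (hu : 0 < u) (L : List (Fin u → ZMod 2)) (hL : L.Nodup) :
    ∀ st : γ → ZMod 2, st onew = 1 → (∀ i, st (xw i) = x i) →
      (∀ i, st (cw i) = x i + 1) → (∀ a ∈ L, ∀ k, st (zw (a, k)) = 0) →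
      ∀ a ∈ L, ∀ k : Fin u,
        execI (blockW ι xw cw onew zw L) st (zw (a, k)) = PW ι x a (k : ℕ) := by
  induction L with
  | nil => intro st _ _ _ _ a ha; exact absurd ha List.not_mem_nil
  | cons a0 L' ihL =>
    intro st hst1 hstx hstc hst0 a ha k
    rw [List.nodup_cons] at hL
    have hblock : blockW ι xw cw onew zw (a0 :: L')
        = chainW ι xw cw onew zw a0 u ++ blockW ι xw cw onew zw L' := rfl
    set st' := execI (chainW ι xw cw onew zw a0 u) st with hst'
    rw [hblock, execI_append, ← hst']
    have hst1' : st' onew = 1 := by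
      rw [hst', chainW_frame le_rfl st fun k' h => hone _ h.symm]; exact hst1
    have hstx' : ∀ i, st' (xw i) = x i := fun i => by
      rw [hst', chainW_frame le_rfl st fun k' h => hxw _ _ h.symm]; exact hstx i
    have hstc' : ∀ i, st' (cw i) = x i + 1 := fun i => by
      rw [hst', chainW_frame le_rfl st fun k' h => hcw _ _ h.symm]; exact hstc i
    have hst0' : ∀ b ∈ L', ∀ k', st' (zw (b, k')) = 0 := by
      intro b hb k'
      have hne : ∀ k'' : Fin u, zw (b, k') ≠ zw (a0, k'') := by
        intro k'' hEq
        have := hz hEq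
        simp only [Prod.mk.injEq] at this
        exact hL.1 (this.1 ▸ hb)
      rw [hst', chainW_frame le_rfl st hne]
      exact hst0 b (List.mem_cons_of_mem _ hb) k'
    rcases List.mem_cons.1 ha with rfl | ha'
    · rw [blockW_frame hz st' (w := zw (a, k)) ?_]
      · have := chainW_val (ι := ι) x hz hone hxw hcw honex honec st hst1 hstx hstc a
          (hst0 a List.mem_cons_self) u le_rfl (k : ℕ) k.isLt
        rw [hst']
        convert this using 3
      · intro b hb k' hEq
        have := hz hEq
        simp only [Prod.mk.injEq] at this
        exact hL.1 (this.1 ▸ hb)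
    · exact ihL hL.2 st' hst1' hstx' hstc' hst0' a ha' k

end Block
set_option synthInstance.maxSize 1000
noncomputable section Construction
variable (n t : ℕ)

/-- The auxiliary wires. -/
abbrev WR := Unit ⊕ (Fin n ⊕ (((Fin t → ZMod 2) × Fin t) ⊕
  (((Fin (n - t) → ZMod 2) × Fin (n - t)) ⊕ (Fin n → ZMod 2))))

/-- The full set of wires. -/
abbrev Wir := Fin n ⊕ WR n t

def wx (i : Fin n) : Wir n t := Sum.inl i
def wone : Wir n t := Sum.inr (Sum.inl ())
def wc (i : Fin n) : Wir n t := Sum.inr (Sum.inr (Sum.inl i))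
def wA (p : (Fin t → ZMod 2) × Fin t) : Wir n t := Sum.inr (Sum.inr (Sum.inr (Sum.inl p)))
def wB (p : (Fin (n - t) → ZMod 2) × Fin (n - t)) : Wir n t :=
  Sum.inr (Sum.inr (Sum.inr (Sum.inr (Sum.inl p))))
def wO (v : Fin n → ZMod 2) : Wir n t := Sum.inr (Sum.inr (Sum.inr (Sum.inr (Sum.inr v))))

def idxA (h2 : t < n) : Fin t → Fin n := fun k => ⟨k, by omega⟩
def idxB : Fin (n - t) → Fin n := fun k => ⟨t + k, by have := k.isLt; omega⟩

def body1 (i : Fin n) : List (Instr (Wir n t)) := [({wx n t i}, wc n t i), (∅, wc n t i)]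

def prog0 : List (Instr (Wir n t)) := [(∅, wone n t)]
def prog1 : List (Instr (Wir n t)) := (List.finRange n).flatMap (body1 n t)
def prog2 (h2 : t < n) : List (Instr (Wir n t)) :=
  blockW (idxA n t h2) (wx n t) (wc n t) (wone n t) (wA n t) Finset.univ.toList
def prog3 : List (Instr (Wir n t)) :=
  blockW (idxB n t) (wx n t) (wc n t) (wone n t) (wB n t) Finset.univ.toList
def lastA (h1 : 0 < t) : Fin t := ⟨t - 1, by omega⟩
def lastB (h2 : t < n) : Fin (n - t) := ⟨n - t - 1, by omega⟩
def resA (h2 : t < n) (v : Fin n → ZMod 2) : Fin t → ZMod 2 := fun k => v (idxA n t h2 k)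
def resB (v : Fin n → ZMod 2) : Fin (n - t) → ZMod 2 := fun k => v (idxB n t k)
def gate4 (h1 : 0 < t) (h2 : t < n) (v : Fin n → ZMod 2) : Instr (Wir n t) :=
  ({wA n t (resA n t h2 v, lastA t h1), wB n t (resB n t v, lastB n t h2)}, wO n t v)
def prog4 (h1 : 0 < t) (h2 : t < n) : List (Instr (Wir n t)) :=
  (Finset.univ.toList : List (Fin n → ZMod 2)).map (gate4 n t h1 h2)
def progAll (h1 : 0 < t) (h2 : t < n) : List (Instr (Wir n t)) :=
  prog0 n t ++ prog1 n t ++ prog2 n t h2 ++ prog3 n t ++ prog4 n t h1 h2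

-- injectivity of wire constructors
lemma wc_inj : Function.Injective (wc n t) := fun a b h => by simpa [wc] using h
lemma wA_inj : Function.Injective (wA n t) := fun a b h => by simpa [wA] using h
lemma wB_inj : Function.Injective (wB n t) := fun a b h => by simpa [wB] using h
lemma wO_inj : Function.Injective (wO n t) := fun a b h => by simpa [wO] using h

end Construction
noncomputable section Semantics
variable (n t : ℕ)

lemma body1_target {i : Fin n} {p : Instr (Wir n t)} (hp : p ∈ body1 n t i) :
    p.2 = wc n t i := by
  simp only [body1, List.mem_cons, List.not_mem_nil, or_false] at hp
  rcases hp with rfl | rfl <;> rfl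

lemma loop1_frame (L : List (Fin n)) (st : Wir n t → ZMod 2) {w : Wir n t}
    (hw : ∀ i, w ≠ wc n t i) : execI (L.flatMap (body1 n t)) st w = st w := by
  refine execI_untouched _ _ _ fun p hp => ?_
  rcases List.mem_flatMap.1 hp with ⟨i, hi, hpi⟩
  rw [body1_target n t hpi]
  exact fun h => hw i h.symm

lemma loop1_val (L : List (Fin n)) (hL : L.Nodup) :
    ∀ st : Wir n t → ZMod 2, ∀ i ∈ L,
      execI (L.flatMap (body1 n t)) st (wc n t i)
        = st (wx n t i) + st (wc n t i) + 1 := by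
  induction L with
  | nil => intro st i hi; exact absurd hi List.not_mem_nil
  | cons j L' ih =>
    intro st i hi
    rw [List.nodup_cons] at hL
    have hbind : (j :: L').flatMap (body1 n t) = body1 n t j ++ L'.flatMap (body1 n t) := rfl
    rw [hbind, execI_append]
    set st' := execI (body1 n t j) st with hst'
    have hframe1 : ∀ w, w ≠ wc n t j → st' w = st w := fun w hw => by
      rw [hst']
      exact execI_untouched _ _ _ fun p hp => by
        rw [body1_target n t hp]; exact fun h => hw (h ▸ rfl)
    have hcj : st' (wc n t j) = st (wx n t j) + st (wc n t j) + 1 := by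
      rw [hst']
      show stepI (stepI st ({wx n t j}, wc n t j)) (∅, wc n t j) (wc n t j) = _
      have hne : wc n t j ∉ ({wx n t j} : Finset (Wir n t)) := by simp [wc, wx]
      simp only [stepI, Function.update_self, Finset.erase_eq_of_notMem hne,
        Finset.erase_empty, Finset.prod_singleton, Finset.prod_empty]
      ring
    rcases List.mem_cons.1 hi with rfl | hi'
    · rw [execI_untouched _ _ _ fun p hp => ?_]
      · exact hcj
      · rcases List.mem_flatMap.1 hp with ⟨i', hi', hpi⟩
        rw [body1_target n t hpi]
        exact fun h => hL.1 (wc_inj n t h ▸ hi')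
    · rw [ih hL.2 st' i hi', hframe1 _ (by simp [wx, wc]),
        hframe1 _ fun h => hL.1 (by rw [← wc_inj n t h]; exact hi')]

lemma loop4_val (h1 : 0 < t) (h2 : t < n) (L : List (Fin n → ZMod 2)) (hL : L.Nodup) :
    ∀ st : Wir n t → ZMod 2, ∀ v ∈ L,
      execI (L.map (gate4 n t h1 h2)) st (wO n t v)
        = st (wO n t v) + st (wA n t (resA n t h2 v, lastA t h1))
            * st (wB n t (resB n t v, lastB n t h2)) := by
  induction L with
  | nil => intro st v hv; exact absurd hv List.not_mem_nil
  | cons v0 L' ih =>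
    intro st v hv
    rw [List.nodup_cons] at hL
    rw [List.map_cons, execI_cons]
    set st' := stepI st (gate4 n t h1 h2 v0) with hst'
    have hframe : ∀ w, w ≠ wO n t v0 → st' w = st w := fun w hw => by
      rw [hst']; exact stepI_noteq _ _ _ fun h => hw (h ▸ rfl)
    rcases List.mem_cons.1 hv with rfl | hv'
    · rw [execI_untouched _ _ _ fun p hp => ?_]
      · rw [hst']
        have hnotmem : wO n t v ∉
            ({wA n t (resA n t h2 v, lastA t h1), wB n t (resB n t v, lastB n t h2)} :
              Finset (Wir n t)) := by simp [wO, wA, wB]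
        have hpair : wA n t (resA n t h2 v, lastA t h1) ≠ wB n t (resB n t v, lastB n t h2) := by
          simp [wA, wB]
        show stepI st (gate4 n t h1 h2 v) (wO n t v) = _
        simp only [stepI, gate4, Function.update_self, Finset.erase_eq_of_notMem hnotmem,
          Finset.prod_pair hpair]
      · rcases List.mem_map.1 hp with ⟨v', hv', rfl⟩
        exact fun h => hL.1 (wO_inj n t h ▸ hv')
    · rw [ih hL.2 st' v hv', hframe _ fun h => hL.1 (by rw [← wO_inj n t h]; exact hv'),
        hframe _ (by simp [wA, wO]), hframe _ (by simp [wB, wO])]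

end Semantics
noncomputable section Correct
variable (n t : ℕ)

-- wire distinctness facts
lemma hAone : ∀ p, wA n t p ≠ wone n t := fun p => by simp [wA, wone]
lemma hAx : ∀ p i, wA n t p ≠ wx n t i := fun p i => by simp [wA, wx]
lemma hAc : ∀ p i, wA n t p ≠ wc n t i := fun p i => by simp [wA, wc]
lemma hBone : ∀ p, wB n t p ≠ wone n t := fun p => by simp [wB, wone]
lemma hBx : ∀ p i, wB n t p ≠ wx n t i := fun p i => by simp [wB, wx]
lemma hBc : ∀ p i, wB n t p ≠ wc n t i := fun p i => by simp [wB, wc]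
lemma honex' : ∀ i, wone n t ≠ wx n t i := fun i => by simp [wone, wx]
lemma honec' : ∀ i, wone n t ≠ wc n t i := fun i => by simp [wone, wc]

theorem prog_correct (h1 : 0 < t) (h2 : t < n) (x v : Fin n → ZMod 2) :
    execI (progAll n t h1 h2) (Sum.elim x fun _ => 0) (wO n t v)
      = PW (idxA n t h2) x (resA n t h2 v) (t - 1)
        * PW (idxB n t) x (resB n t v) (n - t - 1) := by
  set st0 : Wir n t → ZMod 2 := Sum.elim x fun _ => 0 with hst0
  rw [progAll, execI_append, execI_append, execI_append, execI_append]
  set s1 := execI (prog0 n t) st0 with hs1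
  set s2 := execI (prog1 n t) s1 with hs2
  set s3 := execI (prog2 n t h2) s2 with hs3
  set s4 := execI (prog3 n t) s3 with hs4
  -- stage 1
  have e1 : s1 = Function.update st0 (wone n t) 1 := by
    rw [hs1]
    show stepI st0 (∅, wone n t) = _
    have : st0 (wone n t) = 0 := rfl
    simp [stepI, this]
  have f1one : s1 (wone n t) = 1 := by rw [e1, Function.update_self]
  have f1x : ∀ i, s1 (wx n t i) = x i := fun i => by
    rw [e1, Function.update_of_ne (by simp [wx, wone])]; rfl
  have f1c : ∀ i, s1 (wc n t i) = 0 := fun i => by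
    rw [e1, Function.update_of_ne (by simp [wc, wone])]; rfl
  have f1A : ∀ p, s1 (wA n t p) = 0 := fun p => by
    rw [e1, Function.update_of_ne (hAone n t p)]; rfl
  have f1B : ∀ p, s1 (wB n t p) = 0 := fun p => by
    rw [e1, Function.update_of_ne (hBone n t p)]; rfl
  have f1O : ∀ w, s1 (wO n t w) = 0 := fun w => by
    rw [e1, Function.update_of_ne (by simp [wO, wone])]; rfl
  -- stage 2
  have fr2 : ∀ w, (∀ i, w ≠ wc n t i) → s2 w = s1 w := fun w hw =>
    loop1_frame n t _ s1 hw
  have f2one : s2 (wone n t) = 1 := by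
    rw [fr2 _ fun i => (honec' n t i), f1one]
  have f2x : ∀ i, s2 (wx n t i) = x i := fun i => by
    rw [fr2 _ fun i' => (by simp [wx, wc]), f1x]
  have f2c : ∀ i, s2 (wc n t i) = x i + 1 := fun i => by
    rw [hs2, prog1, loop1_val n t _ (List.nodup_finRange n) s1 i (List.mem_finRange i),
      f1x, f1c, add_zero]
  have f2A : ∀ p, s2 (wA n t p) = 0 := fun p => by
    rw [fr2 _ fun i => hAc n t p i, f1A]
  have f2B : ∀ p, s2 (wB n t p) = 0 := fun p => by
    rw [fr2 _ fun i => hBc n t p i, f1B]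
  have f2O : ∀ w, s2 (wO n t w) = 0 := fun w => by
    rw [fr2 _ fun i => (by simp [wO, wc]), f1O]
  -- stage 3 : the A block
  have fr3 : ∀ w, (∀ a k, w ≠ wA n t (a, k)) → s3 w = s2 w := fun w hw => by
    rw [hs3, prog2]
    exact blockW_frame (wA_inj n t) s2 fun a _ k => hw a k
  have f3one : s3 (wone n t) = 1 := by
    rw [fr3 _ fun a k => Ne.symm (hAone n t (a, k))]; exact f2one
  have f3x : ∀ i, s3 (wx n t i) = x i := fun i => by
    rw [fr3 _ fun a k => Ne.symm (hAx n t (a, k) i)]; exact f2x i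
  have f3c : ∀ i, s3 (wc n t i) = x i + 1 := fun i => by
    rw [fr3 _ fun a k => Ne.symm (hAc n t (a, k) i)]; exact f2c i
  have f3A : ∀ a (k : Fin t), s3 (wA n t (a, k)) = PW (idxA n t h2) x a (k : ℕ) := by
    intro a k
    rw [hs3, prog2]
    exact blockW_val x (wA_inj n t) (hAone n t) (hAx n t) (hAc n t) (honex' n t)
      (honec' n t) h1 Finset.univ.toList (Finset.nodup_toList _) s2 f2one f2x f2c
      (fun a' _ k' => f2A (a', k')) a (by simp [Finset.mem_toList]) k
  have f3B : ∀ p, s3 (wB n t p) = 0 := fun p => by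
    rw [fr3 _ fun a k => (by simp [wA, wB])]; exact f2B p
  have f3O : ∀ w, s3 (wO n t w) = 0 := fun w => by
    rw [fr3 _ fun a k => (by simp [wA, wO])]; exact f2O w
  -- stage 4 : the B block
  have hs' : 0 < n - t := by omega
  have fr4 : ∀ w, (∀ b k, w ≠ wB n t (b, k)) → s4 w = s3 w := fun w hw => by
    rw [hs4, prog3]
    exact blockW_frame (wB_inj n t) s3 fun b _ k => hw b k
  have f4A : ∀ a (k : Fin t), s4 (wA n t (a, k)) = PW (idxA n t h2) x a (k : ℕ) := by
    intro a k
    rw [fr4 _ fun b k' => (by simp [wA, wB])]; exact f3A a k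
  have f4B : ∀ b (k : Fin (n - t)), s4 (wB n t (b, k)) = PW (idxB n t) x b (k : ℕ) := by
    intro b k
    rw [hs4, prog3]
    exact blockW_val x (wB_inj n t) (hBone n t) (hBx n t) (hBc n t) (honex' n t)
      (honec' n t) hs' Finset.univ.toList (Finset.nodup_toList _) s3 f3one f3x f3c
      (fun b' _ k' => f3B (b', k')) b (by simp [Finset.mem_toList]) k
  have f4O : ∀ w, s4 (wO n t w) = 0 := fun w => by
    rw [fr4 _ fun b k => (by simp [wB, wO])]; exact f3O w
  -- stage 5
  rw [prog4, loop4_val n t h1 h2 Finset.univ.toList (Finset.nodup_toList _) s4 v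
    (by simp [Finset.mem_toList]), f4O, f4A, f4B, zero_add]
  rfl

end Correct
section GateOk
variable {γ : Type*} [DecidableEq γ] {n u : ℕ} {ι : Fin u → Fin n}
  {xw cw : Fin n → γ} {onew : γ} {zw : (Fin u → ZMod 2) × Fin u → γ}
  (hz : Function.Injective zw) (hone : ∀ p, zw p ≠ onew)
  (hxw : ∀ p i, zw p ≠ xw i) (hcw : ∀ p i, zw p ≠ cw i)

include hz hone hxw hcw in
lemma gateW_ok (a : Fin u → ZMod 2) (k : ℕ) (hk : k < u) :
    (gateW ι xw cw onew zw a k).1.card ≤ 2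
      ∧ (gateW ι xw cw onew zw a k).2 ∉ (gateW ι xw cw onew zw a k).1 := by
  rw [gateW, dif_pos hk]
  constructor
  · exact le_trans (Finset.card_insert_le _ _) (by simp)
  · simp only [Finset.mem_insert, Finset.mem_singleton]
    push_neg
    constructor
    · split
      · exact hone _
      · intro hEq
        have := hz hEq
        simp only [Prod.mk.injEq, Fin.mk.injEq] at this
        omega
    · rw [litW]
      split
      · exact hcw _ _
      · exact hxw _ _

include hz hone hxw hcw in
lemma blockW_ok {L : List (Fin u → ZMod 2)} {p : Instr γ}
    (hp : p ∈ blockW ι xw cw onew zw L) : p.1.card ≤ 2 ∧ p.2 ∉ p.1 := by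
  rcases List.mem_flatMap.1 hp with ⟨a, _, hpa⟩
  rcases List.mem_map.1 hpa with ⟨k, hk, rfl⟩
  rw [List.mem_range] at hk
  exact gateW_ok hz hone hxw hcw a k hk
end GateOk

section Extra
variable (n t : ℕ)

lemma prog_ok (h1 : 0 < t) (h2 : t < n) :
    ∀ p ∈ progAll n t h1 h2, p.1.card ≤ 2 ∧ p.2 ∉ p.1 := by
  intro p hp
  rw [progAll] at hp
  simp only [List.mem_append] at hp
  rcases hp with ((((hp | hp) | hp) | hp) | hp)
  · simp only [prog0, List.mem_singleton] at hp
    subst hp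
    simp
  · rcases List.mem_flatMap.1 hp with ⟨i, _, hpi⟩
    simp only [body1, List.mem_cons, List.not_mem_nil, or_false] at hpi
    rcases hpi with rfl | rfl
    · exact ⟨by simp, by simp [wx, wc]⟩
    · simp
  · exact blockW_ok (wA_inj n t) (hAone n t) (hAx n t) (hAc n t) hp
  · exact blockW_ok (wB_inj n t) (hBone n t) (hBx n t) (hBc n t) hp
  · rcases List.mem_map.1 hp with ⟨v, _, rfl⟩
    refine ⟨le_trans (Finset.card_insert_le _ _) (by simp), ?_⟩
    simp only [gate4, Finset.mem_insert, Finset.mem_singleton]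
    push_neg
    exact ⟨by simp [wO, wA], by simp [wO, wB]⟩

lemma prod_split (h1 : 0 < t) (h2 : t < n) (x v : Fin n → ZMod 2) :
    PW (idxA n t h2) x (resA n t h2 v) (t - 1)
      * PW (idxB n t) x (resB n t v) (n - t - 1) = ∏ i, (x i + v i + 1) := by
  set F : ℕ → ZMod 2 := fun j => if h : j < n then x ⟨j, h⟩ + v ⟨j, h⟩ + 1 else 1 with hF
  have hA : PW (idxA n t h2) x (resA n t h2 v) (t - 1) = ∏ j ∈ Finset.range t, F j := by
    rw [PW, Nat.sub_add_cancel h1]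
    refine Finset.prod_congr rfl fun j hj => ?_
    rw [Finset.mem_range] at hj
    rw [dif_pos hj, hF]
    have hjn : j < n := by omega
    simp only [dif_pos hjn]
    rfl
  have hB : PW (idxB n t) x (resB n t v) (n - t - 1)
      = ∏ j ∈ Finset.range (n - t), F (t + j) := by
    rw [PW, Nat.sub_add_cancel (by omega : 1 ≤ n - t)]
    refine Finset.prod_congr rfl fun j hj => ?_
    rw [Finset.mem_range] at hj
    rw [dif_pos hj, hF]
    have hjn : t + j < n := by omega
    simp only [dif_pos hjn]
    rfl
  have hn : t + (n - t) = n := by omega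
  have hsplit : (∏ j ∈ Finset.range t, F j) * ∏ j ∈ Finset.range (n - t), F (t + j)
      = ∏ j ∈ Finset.range n, F j := by
    rw [← Finset.prod_range_add F t (n - t), hn]
  have hall : (∏ j ∈ Finset.range n, F j) = ∏ i, (x i + v i + 1) := by
    rw [← Fin.prod_univ_eq_prod_range]
    refine Finset.prod_congr rfl fun i _ => ?_
    simp only [hF, dif_pos i.isLt, Fin.eta]
  rw [hA, hB, hsplit, hall]

lemma length_bind_const {α β : Type*} (L : List α) (f : α → List β) (c : ℕ)
    (h : ∀ a, (f a).length = c) : (L.flatMap f).length = L.length * c := by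
  induction L with
  | nil => simp
  | cons a L ih =>
      rw [show (a :: L).flatMap f = f a ++ L.flatMap f from rfl, List.length_append, ih, h a,
        List.length_cons]
      ring

lemma card2t : Fintype.card (Fin t → ZMod 2) = 2 ^ t := by
  simp [Fintype.card_fun]

lemma progAll_length (h1 : 0 < t) (h2 : t < n) :
    (progAll n t h1 h2).length
      = 1 + n * 2 + 2 ^ t * t + 2 ^ (n - t) * (n - t) + 2 ^ n := by
  rw [progAll]
  simp only [List.length_append]
  have l0 : (prog0 n t).length = 1 := rfl
  have l1 : (prog1 n t).length = n * 2 := by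
    rw [prog1, length_bind_const (List.finRange n) (body1 n t) 2 (fun i => rfl), List.length_finRange]
  have l2 : (prog2 n t h2).length = 2 ^ t * t := by
    rw [prog2, blockW, length_bind_const _ _ t fun a => by
      simp [chainW], Finset.length_toList, Finset.card_univ, card2t]
  have l3 : (prog3 n t).length = 2 ^ (n - t) * (n - t) := by
    rw [prog3, blockW, length_bind_const _ _ (n - t) fun a => by
      simp [chainW], Finset.length_toList, Finset.card_univ, card2t]
  have l4 : (prog4 n t h1 h2).length = 2 ^ n := by
    rw [prog4, List.length_map, Finset.length_toList, Finset.card_univ, card2t]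
  rw [l0, l1, l2, l3, l4]

lemma cardWR :
    Fintype.card (WR n t) = 1 + n + 2 ^ t * t + 2 ^ (n - t) * (n - t) + 2 ^ n := by
  rw [show Fintype.card (WR n t)
      = 1 + (n + (2 ^ t * t + (2 ^ (n - t) * (n - t) + 2 ^ n))) from ?_]
  · ring
  · rw [Fintype.card_sum, Fintype.card_sum, Fintype.card_sum, Fintype.card_sum,
      Fintype.card_prod, Fintype.card_prod, card2t, card2t, Fintype.card_unit,
      Fintype.card_fin, Fintype.card_fin, Fintype.card_fin, card2t]

end Extra
lemma numericBound (ε : ℝ) (hε : 0 < ε) :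
    ∃ N : ℕ, 2 ≤ N ∧ ∀ n : ℕ, N ≤ n →
      ((1 + 2 * n + 2 ^ (n / 2) * (n / 2) + 2 ^ (n - n / 2) * (n - n / 2) : ℕ) : ℝ)
        ≤ ε * 2 ^ n := by
  set r := Real.sqrt 2 with hrdef
  have hr2 : r ^ 2 = 2 := Real.sq_sqrt (by norm_num)
  have hr0 : 0 < r := Real.sqrt_pos.2 (by norm_num)
  have hr1 : 1 < r := by nlinarith
  have hrle2 : r ≤ 2 := by nlinarith
  have hinv0 : (0 : ℝ) ≤ r⁻¹ := by positivity
  have hinv1 : r⁻¹ < 1 := inv_lt_one_of_one_lt₀ hr1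
  have htend := tendsto_self_mul_const_pow_of_lt_one hinv0 hinv1
  have hev := htend.eventually (gt_mem_nhds (show (0 : ℝ) < ε / 14 by positivity))
  obtain ⟨N, hN⟩ := Filter.eventually_atTop.1 (hev.and (Filter.eventually_ge_atTop 2))
  refine ⟨max N 2, le_max_right _ _, fun n hn => ?_⟩
  obtain ⟨h14, h2n⟩ := hN n (le_trans (le_max_left _ _) hn)
  have hRpos : 0 < r ^ n := pow_pos hr0 n
  have hnr : (n : ℝ) < ε / 14 * r ^ n := by
    rw [inv_pow, ← div_eq_mul_inv] at h14
    exact (div_lt_iff₀ hRpos).1 h14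
  have hRn : 1 ≤ r ^ n := by
    have := pow_le_pow_right₀ hr1.le (Nat.zero_le n)
    rwa [pow_zero] at this
  set t := n / 2 with htdef
  set s := n - n / 2 with hsdef
  have hts : t ≤ s := by omega
  have hsn : s ≤ n := by omega
  have h2s : 2 * s ≤ n + 1 := by omega
  have hps : (2 : ℝ) ^ s ≤ 2 * r ^ n := by
    have e1 : (2 : ℝ) ^ s = r ^ (2 * s) := by rw [pow_mul, hr2]
    have e2 : r ^ (2 * s) ≤ r ^ (n + 1) := pow_le_pow_right₀ hr1.le h2s
    have e3 : r ^ (n + 1) = r ^ n * r := pow_succ r n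
    rw [e1]
    calc r ^ (2 * s) ≤ r ^ n * r := e3 ▸ e2
      _ ≤ r ^ n * 2 := by nlinarith
      _ = 2 * r ^ n := by ring
  have hpt : (2 : ℝ) ^ t ≤ 2 * r ^ n :=
    le_trans (pow_le_pow_right₀ (by norm_num) hts) hps
  have hcast : ((1 + 2 * n + 2 ^ t * t + 2 ^ s * s : ℕ) : ℝ)
      = 1 + 2 * n + 2 ^ t * t + 2 ^ s * s := by push_cast; ring
  rw [hcast]
  have htn : (t : ℝ) ≤ n := by exact_mod_cast Nat.div_le_self n 2
  have hsn' : (s : ℝ) ≤ n := by exact_mod_cast hsn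
  have hb1 : (2 : ℝ) ^ t * t ≤ 2 * (n * r ^ n) :=
    calc (2 : ℝ) ^ t * t ≤ 2 * r ^ n * n :=
          mul_le_mul hpt htn (by positivity) (by positivity)
      _ = 2 * (n * r ^ n) := by ring
  have hb2 : (2 : ℝ) ^ s * s ≤ 2 * (n * r ^ n) :=
    calc (2 : ℝ) ^ s * s ≤ 2 * r ^ n * n :=
          mul_le_mul hps hsn' (by positivity) (by positivity)
      _ = 2 * (n * r ^ n) := by ring
  have hn2 : (2 : ℝ) ≤ n := by exact_mod_cast h2n
  have h2pow : (2 : ℝ) ^ n = r ^ n * r ^ n := by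
    rw [← hr2, ← pow_mul, two_mul, pow_add]
  rw [h2pow]
  have key : (1 : ℝ) + 2 * n + 4 * (n * r ^ n) ≤ ε * (r ^ n * r ^ n) := by
    have k2 : (n : ℝ) ≤ n * r ^ n :=
      le_mul_of_one_le_right (by linarith) hRn
    have k1 : (1 : ℝ) ≤ n * r ^ n := by linarith
    have k3 : (n : ℝ) * r ^ n ≤ ε / 14 * r ^ n * r ^ n :=
      mul_le_mul_of_nonneg_right hnr.le hRpos.le
    have k4 : (7 : ℝ) * (ε / 14 * r ^ n * r ^ n) = ε / 2 * (r ^ n * r ^ n) := by ring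
    have k5 : (0 : ℝ) ≤ r ^ n * r ^ n := by positivity
    have k6 : ε / 2 * (r ^ n * r ^ n) ≤ ε * (r ^ n * r ^ n) := by nlinarith [k5, hε]
    linarith
  linarith [hb1, hb2, key]

/-- All `2^n` conjunctions `x₁^{a₁} ∧ … ∧ x_n^{a_n}` can be realized by a reversible
circuit of complexity `∼ 2^n` using `∼ 2^n` additional inputs. In `ZMod 2` the
conjunction `x₁^{a₁} ∧ … ∧ x_n^{a_n}` equals `∏ i, (x i + a i + 1)`. -/
theorem stmt12 (ε : ℝ) (hε : 0 < ε) :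
    ∃ N : ℕ, ∀ n, N ≤ n →
      ∃ q : ℕ, (q : ℝ) ≤ (1 + ε) * 2 ^ n ∧
        ∃ l : List (Equiv.Perm (Fin (n + q) → ZMod 2)),
          (∀ g ∈ l, g ∈ gateSet (n + q)) ∧
          (l.length : ℝ) ≤ (1 + ε) * 2 ^ n ∧
          ∃ σ : (Fin n → ZMod 2) → Fin (n + q), Function.Injective σ ∧
            ∀ x a : Fin n → ZMod 2,
              circuitPerm l (extendMap n q x) (σ a) = ∏ i, (x i + a i + 1) := by
  obtain ⟨N, hN2, hN⟩ := numericBound ε hε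
  refine ⟨N, fun n hn => ?_⟩
  have h2le : 2 ≤ n := le_trans hN2 hn
  set t := n / 2 with htdef
  have h1 : 0 < t := by omega
  have h2 : t < n := by omega
  set q := Fintype.card (WR n t) with hqdef
  have hq : q = 1 + n + 2 ^ t * t + 2 ^ (n - t) * (n - t) + 2 ^ n := cardWR n t
  have hnum := hN n hn
  have hpow_pos : (0 : ℝ) < 2 ^ n := by positivity
  have hbound : ∀ m : ℕ, m ≤ 1 + 2 * n + 2 ^ t * t + 2 ^ (n - t) * (n - t) + 2 ^ n →
      (m : ℝ) ≤ (1 + ε) * 2 ^ n := by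
    intro m hm
    have : (m : ℝ) ≤ ((1 + 2 * n + 2 ^ t * t + 2 ^ (n - t) * (n - t) : ℕ) : ℝ) + 2 ^ n := by
      have := (Nat.cast_le (α := ℝ)).2 hm
      push_cast at this ⊢
      linarith
    calc (m : ℝ) ≤ _ + 2 ^ n := this
      _ ≤ ε * 2 ^ n + 2 ^ n := by linarith [hnum]
      _ = (1 + ε) * 2 ^ n := by ring
  set e : Wir n t ≃ Fin (n + q) :=
    (Equiv.sumCongr (Equiv.refl (Fin n)) (Fintype.equivFin (WR n t))).trans finSumFinEquiv
    with hedef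
  refine ⟨q, hbound q (by omega), ((progAll n t h1 h2).map (mapInstr e)).map
    (fun p => kcnot (n + q) p.1 p.2), ?_, ?_, fun v => e (wO n t v), ?_, ?_⟩
  · -- gates
    intro g hg
    rcases List.mem_map.1 hg with ⟨p', hp', rfl⟩
    rcases List.mem_map.1 hp' with ⟨p, hp, rfl⟩
    obtain ⟨hcard, hnotmem⟩ := prog_ok n t h1 h2 p hp
    refine ⟨(mapInstr e p).1, (mapInstr e p).2, ?_, ?_, rfl⟩
    · rw [mapInstr, Finset.card_map]; exact hcard
    · rw [mapInstr]
      exact fun h => hnotmem ((Finset.mem_map' e.toEmbedding).1 h)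
  · -- length
    rw [List.length_map, List.length_map, progAll_length n t h1 h2]
    exact hbound _ (by omega)
  · exact fun a b h => wO_inj n t (e.injective h)
  · intro x v
    rw [circuitPerm_map]
    have hmap := congrFun (execI_map e (progAll n t h1 h2) (extendMap n q x)) (wO n t v)
    rw [Function.comp_apply] at hmap
    rw [hmap]
    have hcomp : extendMap n q x ∘ e = Sum.elim x fun _ => 0 := by
      funext w
      rcases w with i | w
      · have he : e (Sum.inl i) = Fin.castAdd q i := by
          simp [hedef, Equiv.sumCongr_apply, finSumFinEquiv_apply_left]; rfl
        show extendMap n q x (e (Sum.inl i)) = x i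
        rw [he, extendMap]
        have hi : ((Fin.castAdd q i : Fin (n + q)) : ℕ) < n := by
          simp [Fin.coe_castAdd, i.isLt]
        rw [dif_pos hi]
        exact congrArg x (Fin.ext (by simp))
      · have he : e (Sum.inr w) = Fin.natAdd n (Fintype.equivFin (WR n t) w) := by
          simp [hedef, Equiv.sumCongr_apply, finSumFinEquiv_apply_right]
        show extendMap n q x (e (Sum.inr w)) = 0
        rw [he, extendMap]
        rw [dif_neg (by simp [Fin.coe_natAdd])]
    rw [hcomp, prog_correct n t h1 h2 x v, prod_split n t h1 h2 x v]
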